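/- Let n ≥ 1 and r be integers with 1 ≤ r ≤ n, and let γ > 0. Then for every y ∈ [0,1]^n with Σ_{i=1}^n y_i = r, Σ_{i=1}^n (y_i + γ) · log( (y_i + γ) / (r/n + γ) ) ≤ r·(1 + γ) · log( (1 + γ)·n / (r + γ·n) ). -/
import Mathlib

lemma shifted_entropy_pointwise (γ c y : ℝ) (hγ : 0 < γ) (hc : 0 < c)
    (hy0 : 0 ≤ y) (hy1 : y ≤ 1) :
    (y + γ) * Real.log ((y + γ) / c)
      ≤ (1 - y) * (γ * Real.log (γ / c)) + y * ((1 + γ) * Real.log ((1 + γ) / c)) := by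
  have hyγ : 0 < y + γ := by linarith
  have h1γ : 0 < 1 + γ := by linarith
  rw [Real.log_div (ne_of_gt hyγ) (ne_of_gt hc), Real.log_div (ne_of_gt hγ) (ne_of_gt hc),
    Real.log_div (ne_of_gt h1γ) (ne_of_gt hc)]
  have key := Real.convexOn_mul_log.2 (Set.mem_Ici.2 hγ.le) (Set.mem_Ici.2 h1γ.le)
    (by linarith : (0:ℝ) ≤ 1 - y) hy0 (by ring : (1 - y) + y = 1)
  simp only [smul_eq_mul] at key
  have hcomb : (1 - y) * γ + y * (1 + γ) = y + γ := by ring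
  rw [hcomb] at key
  nlinarith [key]

/-- Bregman divergence bound for the shifted negative entropy mirror map on the base
polytope of a rank-`r` matroid (Appendix C of the paper). -/
theorem shifted_entropy_bregman_bound
    (n r : ℕ) (hn : 1 ≤ n) (hr1 : 1 ≤ r) (hrn : r ≤ n) (γ : ℝ) (hγ : 0 < γ)
    (y : Fin n → ℝ) (hy : ∀ i, y i ∈ Set.Icc (0 : ℝ) 1)
    (hsum : ∑ i, y i = (r : ℝ)) :
    ∑ i, (y i + γ) * Real.log ((y i + γ) / ((r : ℝ) / (n : ℝ) + γ))
      ≤ (r : ℝ) * (1 + γ) * Real.log ((1 + γ) * (n : ℝ) / ((r : ℝ) + γ * (n : ℝ))) := by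
  have hn0 : (0:ℝ) < n := by exact_mod_cast hn
  have hr0 : (0:ℝ) < r := by exact_mod_cast hr1
  set c : ℝ := (r : ℝ) / (n : ℝ) + γ with hc_def
  have hc : 0 < c := by positivity
  have hcform : (1 + γ) * (n : ℝ) / ((r : ℝ) + γ * (n : ℝ)) = (1 + γ) / c := by
    rw [hc_def]
    field_simp
  rw [hcform]
  have step1 : ∑ i, (y i + γ) * Real.log ((y i + γ) / c)
      ≤ ∑ i, ((1 - y i) * (γ * Real.log (γ / c)) + y i * ((1 + γ) * Real.log ((1 + γ) / c))) := by
    apply Finset.sum_le_sum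
    intro i _
    exact shifted_entropy_pointwise γ c (y i) hγ hc (hy i).1 (hy i).2
  have step2 : ∑ i, ((1 - y i) * (γ * Real.log (γ / c)) + y i * ((1 + γ) * Real.log ((1 + γ) / c)))
      = ((n : ℝ) - r) * (γ * Real.log (γ / c)) + (r : ℝ) * ((1 + γ) * Real.log ((1 + γ) / c)) := by
    rw [Finset.sum_add_distrib, ← Finset.sum_mul, ← Finset.sum_mul]
    simp [Finset.sum_sub_distrib, hsum, sub_mul]
  have hlog0 : Real.log (γ / c) ≤ 0 := by
    apply Real.log_nonpos (by positivity)
    rw [div_le_one hc, hc_def]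
    have : 0 < (r : ℝ) / n := by positivity
    linarith
  have hnr : (0:ℝ) ≤ (n : ℝ) - r := by
    have : (r:ℝ) ≤ n := by exact_mod_cast hrn
    linarith
  calc ∑ i, (y i + γ) * Real.log ((y i + γ) / c)
      ≤ ((n : ℝ) - r) * (γ * Real.log (γ / c)) + (r : ℝ) * ((1 + γ) * Real.log ((1 + γ) / c)) := by
        rw [← step2]; exact step1
    _ ≤ (r : ℝ) * (1 + γ) * Real.log ((1 + γ) / c) := by
        nlinarith [mul_nonneg hnr hγ.le]
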